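/- arXiv:2010.11789 — 2 statements merged into one kernel-verified Lean document; each statement's English description precedes it below -/
import Mathlib

section
/- Assume (HS1) and (HS2) hold, let c̄0 be a nonzero real number, and assume the triplet (G, P^−, P^+) satisfies alternative (a) of (HS3_r̄): the matrices −D_U G(P^−;r̄) and −D_U G(P^+;r̄) are positive definite. Then there exists λ* > 0 such that for every λ ∈ ℂ with Re λ > −λ*, every ρ ∈ [0,1], and every y ∈ ℝ, the d×d complex matrix Δ_{ρ;λ}(iy) = c̄0 i y I + 2τ A(y) − DG_ρ + λ I has nonzero determinant. -/
open MeasureTheory Filter Topology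

noncomputable section

/-- Vectors in `ℝ^d`. -/
abbrev Vec (d : ℕ) := Fin d → ℝ

/-- Vectors in `ℂ^d`. -/
abbrev VecC (d : ℕ) := Fin d → ℂ

variable {d : ℕ}

/-- Euclidean dot product on `ℝ^d`. -/
def dotV {d : ℕ} (x y : Vec d) : ℝ := ∑ i, x i * y i

/-- The spatial mixed-difference operator `Δ₀` with (diagonal) coefficients `α` and constant `τ`:
`(Δ₀ F)(ξ) = τ Σ_{m>0} α_m [F(ξ+m) + F(ξ-m) - 2 F(ξ)]`. -/
def Δ0op {d : ℕ} (τ : ℝ) (α : ℕ → Vec d) (F : ℝ → Vec d) : ℝ → Vec d :=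
  fun ξ i => τ * ∑' m : ℕ, α (m + 1) i *
    (F (ξ + ((m : ℝ) + 1)) i + F (ξ - ((m : ℝ) + 1)) i - 2 * F ξ i)

/-- Complexification of `Δ₀`. -/
def Δ0opC {d : ℕ} (τ : ℝ) (α : ℕ → Vec d) (F : ℝ → VecC d) : ℝ → VecC d :=
  fun ξ i => (τ : ℂ) * ∑' m : ℕ, ((α (m + 1) i : ℝ) : ℂ) *
    (F (ξ + ((m : ℝ) + 1)) i + F (ξ - ((m : ℝ) + 1)) i - 2 * F ξ i)

/-- Assumption (HS1).  The matrices `α_m` are encoded by their diagonals `α m : ℝ^d`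
(indexed so that `α (m+1)` is the coefficient `α_{m+1}`, `m ≥ 0`). -/
structure HS1 (d ddiff : ℕ) (τ : ℝ) (α : ℕ → Vec d) (ν : ℝ) : Prop where
  τ_pos : 0 < τ
  ddiff_pos : 1 ≤ ddiff
  ddiff_le : ddiff ≤ d
  ν_pos : 0 < ν
  diff_nonzero : ∀ i : Fin d, (i : ℕ) < ddiff → ∃ m : ℕ, α (m + 1) i ≠ 0
  nondiff_zero : ∀ i : Fin d, ddiff ≤ (i : ℕ) → ∀ m : ℕ, α (m + 1) i = 0
  exp_summable : Summable (fun m : ℕ => ‖α (m + 1)‖ * Real.exp (((m : ℝ) + 1) * ν))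
  second_moment : ∀ i : Fin d, (i : ℕ) < ddiff →
    ∑' m : ℕ, α (m + 1) i * ((m : ℝ) + 1) ^ 2 = 1
  A_pos : ∀ i : Fin d, (i : ℕ) < ddiff → ∀ z : ℝ, 0 < z → z < 2 * Real.pi →
    0 < ∑' m : ℕ, α (m + 1) i * (1 - Real.cos (((m : ℝ) + 1) * z))

/-- Assumption (HS2): `G : ℝ^d × (0,1) → ℝ^d` is `C²` and `G(P^±; r) = 0` for all `r ∈ (0,1)`. -/
structure HS2 (d : ℕ) (G : Vec d → ℝ → Vec d) (Pm Pp : Vec d) : Prop where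
  smooth : ContDiffOn ℝ 2 (fun z : Vec d × ℝ => G z.1 z.2) (Set.univ ×ˢ Set.Ioo (0:ℝ) 1)
  zero_m : ∀ r ∈ Set.Ioo (0:ℝ) 1, G Pm r = 0
  zero_p : ∀ r ∈ Set.Ioo (0:ℝ) 1, G Pp r = 0

/-- The Jacobian `D_U G(U; r)` as a `d × d` matrix. -/
def DUG {d : ℕ} (G : Vec d → ℝ → Vec d) (U : Vec d) (r : ℝ) : Matrix (Fin d) (Fin d) ℝ :=
  fun i j => fderiv ℝ (fun V => G V r i) U (Pi.single j 1)

/-- A (not necessarily symmetric) real matrix is positive definite if `xᵀ M x > 0` for `x ≠ 0`. -/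
def PosDefQ {d : ℕ} (M : Matrix (Fin d) (Fin d) ℝ) : Prop :=
  ∀ x : Vec d, x ≠ 0 → 0 < dotV x (M.mulVec x)

/-- `x` is supported in the first `ddiff` coordinates. -/
def SuppFirst (d ddiff : ℕ) (x : Vec d) : Prop := ∀ i : Fin d, ddiff ≤ (i : ℕ) → x i = 0

/-- `x` is supported in the last `d - ddiff` coordinates. -/
def SuppLast (d ddiff : ℕ) (x : Vec d) : Prop := ∀ i : Fin d, (i : ℕ) < ddiff → x i = 0

/-- Alternative (a) of assumption (HS3). -/
def HS3a {d : ℕ} (G : Vec d → ℝ → Vec d) (Pm Pp : Vec d) (r : ℝ) : Prop :=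
  PosDefQ (-(DUG G Pm r)) ∧ PosDefQ (-(DUG G Pp r))

/-- Alternative (b) of assumption (HS3): the blocks `−G^{[1,1]}(P^±)` and `−G^{[2,2]}(P^±)` are
positive definite (expressed via vectors supported on the corresponding blocks) and
`G^{[1,2]}(U) = −Γ G^{[2,1]}(U)ᵀ` for some `Γ > 0`. -/
def HS3b {d : ℕ} (ddiff : ℕ) (G : Vec d → ℝ → Vec d) (Pm Pp : Vec d) (r : ℝ) : Prop :=
  (∀ P ∈ ({Pm, Pp} : Set (Vec d)),
    (∀ x : Vec d, x ≠ 0 → SuppFirst d ddiff x → 0 < dotV x ((-(DUG G P r)).mulVec x)) ∧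
    (∀ x : Vec d, x ≠ 0 → SuppLast d ddiff x → 0 < dotV x ((-(DUG G P r)).mulVec x))) ∧
  ∃ Γ : ℝ, 0 < Γ ∧ ∀ U : Vec d, ∀ i j : Fin d, (i : ℕ) < ddiff → ddiff ≤ (j : ℕ) →
    DUG G U r i j = -Γ * DUG G U r j i

/-- Assumption (HS3): one of the two alternatives holds. -/
def HS3 {d : ℕ} (ddiff : ℕ) (G : Vec d → ℝ → Vec d) (Pm Pp : Vec d) (r : ℝ) : Prop :=
  HS3a G Pm Pp r ∨ HS3b ddiff G Pm Pp r

/-- `F ∈ H¹(ℝ; ℝ^d)` with (a.e./weak) derivative `F'`: `F` is an indefinite integral of `F'`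
and both belong to `L²`. -/
structure IsH1 {d : ℕ} (F F' : ℝ → Vec d) : Prop where
  fund : ∀ a b : ℝ, F b - F a = ∫ t in a..b, F' t
  memF : MemLp F 2 volume
  memF' : MemLp F' 2 volume

/-- Complex version of `IsH1`. -/
structure IsH1C {d : ℕ} (F F' : ℝ → VecC d) : Prop where
  fund : ∀ a b : ℝ, F b - F a = ∫ t in a..b, F' t
  memF : MemLp F 2 volume
  memF' : MemLp F' 2 volume

/-- The `L²(ℝ;ℝ^d)` pairing. -/
def innerL2 {d : ℕ} (F G : ℝ → Vec d) : ℝ := ∫ ξ : ℝ, dotV (F ξ) (G ξ)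

/-- The operator `L₀ F = c̄₀ F' − Δ₀ F − D_U G(Ū₀(·); r̄) F`, evaluated on a pair `(F, F')`. -/
def L0op {d : ℕ} (τ c0 : ℝ) (α : ℕ → Vec d) (G : Vec d → ℝ → Vec d) (U0 : ℝ → Vec d)
    (r : ℝ) (F F' : ℝ → Vec d) : ℝ → Vec d :=
  fun ξ => c0 • F' ξ - Δ0op τ α F ξ - (DUG G (U0 ξ) r).mulVec (F ξ)

/-- The formal adjoint `L₀* F = −c̄₀ F' − Δ₀ F − D_U G(Ū₀(·); r̄)ᵀ F`. -/
def L0starop {d : ℕ} (τ c0 : ℝ) (α : ℕ → Vec d) (G : Vec d → ℝ → Vec d) (U0 : ℝ → Vec d)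
    (r : ℝ) (F F' : ℝ → Vec d) : ℝ → Vec d :=
  fun ξ => (-c0) • F' ξ - Δ0op τ α F ξ - (DUG G (U0 ξ) r).transpose.mulVec (F ξ)

/-- Complexification of `L₀ + λ`. -/
def L0opC {d : ℕ} (τ c0 : ℝ) (α : ℕ → Vec d) (G : Vec d → ℝ → Vec d) (U0 : ℝ → Vec d)
    (r : ℝ) (lam : ℂ) (F F' : ℝ → VecC d) : ℝ → VecC d :=
  fun ξ i => (c0 : ℂ) * F' ξ i - Δ0opC τ α F ξ i
    - ∑ j, ((DUG G (U0 ξ) r i j : ℝ) : ℂ) * F ξ j + lam * F ξ i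

/-- Bijectivity (in the a.e. sense) of the complexification of `L₀ + λ` from `H¹` to `L²`. -/
def L0CBijective {d : ℕ} (τ c0 : ℝ) (α : ℕ → Vec d) (G : Vec d → ℝ → Vec d)
    (U0 : ℝ → Vec d) (r : ℝ) (lam : ℂ) : Prop :=
  (∀ H : ℝ → VecC d, MemLp H 2 volume →
    ∃ F F' : ℝ → VecC d, IsH1C F F' ∧
      ∀ᵐ ξ ∂(volume : Measure ℝ), L0opC τ c0 α G U0 r lam F F' ξ = H ξ) ∧
  (∀ F F' : ℝ → VecC d, IsH1C F F' →
    (∀ᵐ ξ ∂(volume : Measure ℝ), L0opC τ c0 α G U0 r lam F F' ξ = 0) →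
    (∀ᵐ ξ ∂(volume : Measure ℝ), F ξ = 0))

/-- Assumption (HW1): existence of the travelling wave `(c̄₀, Ū₀)` for the LDE, with
`Ū₀' = U0'` its (continuous) derivative. -/
structure HW1 {d : ℕ} (τ : ℝ) (α : ℕ → Vec d) (G : Vec d → ℝ → Vec d) (Pm Pp : Vec d)
    (r c0 : ℝ) (U0 U0' : ℝ → Vec d) : Prop where
  c0_ne : c0 ≠ 0
  deriv : ∀ ξ : ℝ, HasDerivAt U0 (U0' ξ) ξ
  cont_deriv : Continuous U0'
  bounded : ∃ C : ℝ, ∀ ξ : ℝ, ‖U0 ξ‖ ≤ C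
  eqn : ∀ ξ : ℝ, c0 • U0' ξ = Δ0op τ α U0 ξ + G (U0 ξ) r
  lim_p : Tendsto U0 atTop (nhds Pp)
  lim_m : Tendsto U0 atBot (nhds Pm)

/-- Assumption (HW2): the spectral stability assumption on `L₀`. -/
structure HW2 {d : ℕ} (τ c0 : ℝ) (α : ℕ → Vec d) (G : Vec d → ℝ → Vec d)
    (U0 U0' : ℝ → Vec d) (r : ℝ) (Φp Φp' Φm Φm' : ℝ → Vec d) (lamT : ℝ) : Prop where
  lamT_pos : 0 < lamT
  h1p : IsH1 Φp Φp'
  h1m : IsH1 Φm Φm'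
  eq_deriv : Φp = U0'
  normalisation : innerL2 Φp Φm = 1
  spec : ∀ lam : ℂ, -lamT ≤ lam.re →
    (L0CBijective τ c0 α G U0 r lam ↔
      ¬ ∃ m : ℤ, lam = 2 * Real.pi * Complex.I * c0 * m)
  eig : ∀ lam : ℂ, (∃ m : ℤ, lam = 2 * Real.pi * Complex.I * c0 * m) →
    ∃ F F' : ℝ → VecC d, IsH1C F F' ∧ ¬ (∀ᵐ ξ ∂(volume : Measure ℝ), F ξ = 0) ∧
      ∀ᵐ ξ ∂(volume : Measure ℝ), L0opC τ c0 α G U0 r lam F F' ξ = 0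
  kerL0 : ∀ F F' : ℝ → Vec d, IsH1 F F' →
    ((∀ᵐ ξ ∂(volume : Measure ℝ), L0op τ c0 α G U0 r F F' ξ = 0) ↔
      ∃ c : ℝ, ∀ᵐ ξ ∂(volume : Measure ℝ), F ξ = c • Φp ξ)
  kerL0star : ∀ F F' : ℝ → Vec d, IsH1 F F' →
    ((∀ᵐ ξ ∂(volume : Measure ℝ), L0starop τ c0 α G U0 r F F' ξ = 0) ↔
      ∃ c : ℝ, ∀ᵐ ξ ∂(volume : Measure ℝ), F ξ = c • Φm ξ)
  kerL0_perp : ∀ g : ℝ → Vec d, MemLp g 2 volume →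
    ((∀ F F' : ℝ → Vec d, IsH1 F F' → innerL2 g (L0starop τ c0 α G U0 r F F') = 0) ↔
      ∃ c : ℝ, ∀ᵐ ξ ∂(volume : Measure ℝ), g ξ = c • Φp ξ)
  kerL0star_perp : ∀ g : ℝ → Vec d, MemLp g 2 volume →
    ((∀ F F' : ℝ → Vec d, IsH1 F F' → innerL2 g (L0op τ c0 α G U0 r F F') = 0) ↔
      ∃ c : ℝ, ∀ᵐ ξ ∂(volume : Measure ℝ), g ξ = c • Φm ξ)

/-! ### Exponentially weighted spaces `BC_{-η}` -/

/-- Membership in `BC_{-η}(ℝ;ℝ^d)`: continuous with `sup_ξ e^{η|ξ|}‖F(ξ)‖ < ∞`. -/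
def MemBC {d : ℕ} (η : ℝ) (F : ℝ → Vec d) : Prop :=
  Continuous F ∧ BddAbove (Set.range fun ξ : ℝ => Real.exp (η * |ξ|) * ‖F ξ‖)

/-- The `BC_{-η}` norm `sup_ξ e^{η|ξ|}‖F(ξ)‖`. -/
def BCnorm {d : ℕ} (η : ℝ) (F : ℝ → Vec d) : ℝ := ⨆ ξ : ℝ, Real.exp (η * |ξ|) * ‖F ξ‖

/-- Membership in `BC¹_{-η}(ℝ;ℝ^d)` of `F` with derivative `F'`. -/
def MemBC1 {d : ℕ} (η : ℝ) (F F' : ℝ → Vec d) : Prop :=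
  (∀ ξ : ℝ, HasDerivAt F (F' ξ) ξ) ∧ Continuous F' ∧
  BddAbove (Set.range fun ξ : ℝ => Real.exp (η * |ξ|) * (‖F ξ‖ + ‖F' ξ‖))

/-- The `BC¹_{-η}` norm `sup_ξ e^{η|ξ|}(‖F(ξ)‖ + ‖F'(ξ)‖)`. -/
def BC1norm {d : ℕ} (η : ℝ) (F F' : ℝ → Vec d) : ℝ :=
  ⨆ ξ : ℝ, Real.exp (η * |ξ|) * (‖F ξ‖ + ‖F' ξ‖)

/-! ### BDF coefficients -/

/-- Backward difference `(∂v)(n) = v(n) − v(n−1)`. -/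
def bdiff (v : ℤ → ℝ) : ℤ → ℝ := fun n => v n - v (n - 1)

/-- `(μ, β)` are the order-`k` BDF coefficients: for every scalar sequence `v`,
`Σ_{n=0}^k μ_n v(n−k) = Σ_{n'=1}^k (∂^{n'} v)(0)`, and `β = Σ_{n=1}^k n μ_n`. -/
def BDFcoeff (k : ℕ) (μ : ℕ → ℝ) (β : ℝ) : Prop :=
  (∀ v : ℤ → ℝ, ∑ n ∈ Finset.range (k + 1), μ n * v ((n : ℤ) - (k : ℤ))
      = ∑ n' ∈ Finset.Icc 1 k, (bdiff^[n'] v) 0) ∧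
  β = ∑ n ∈ Finset.Icc 1 k, (n : ℝ) * μ n

/-! ### The grid space `𝒴_M` (functions on `p⁻¹ℤ`, indexed by `ℤ`) -/

/-- Inner product on `𝒴_M = ℓ²_p(ℝ^d)`: `⟨V,W⟩ = p⁻¹ Σ_{j∈ℤ} ⟨V_j, W_j⟩`. -/
def innerY {d : ℕ} (p : ℕ) (V W : ℤ → Vec d) : ℝ := ((p : ℝ))⁻¹ * ∑' j : ℤ, dotV (V j) (W j)

/-- Membership in `𝒴_M = ℓ²_p(ℝ^d)`. -/
def MemY {d : ℕ} (V : ℤ → Vec d) : Prop := Summable fun j : ℤ => dotV (V j) (V j)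

/-- Norm on `𝒴_M`. -/
def normY {d : ℕ} (p : ℕ) (V : ℤ → Vec d) : ℝ := Real.sqrt (innerY p V V)

/-- Norm on `𝒴¹_{k,M}` (with `DV` the discrete derivative of `V`). -/
def normY1 {d : ℕ} (p : ℕ) (V DV : ℤ → Vec d) : ℝ :=
  Real.sqrt (innerY p V V + innerY p DV DV)

/-- The discrete BDF derivative `D_{k,M}` on the grid `p⁻¹ℤ` (a shift by `M⁻¹` is `q` grid
steps, with `M = p/q`). -/
def DkY {d : ℕ} (k : ℕ) (μ : ℕ → ℝ) (β M : ℝ) (q : ℕ) (V : ℤ → Vec d) : ℤ → Vec d :=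
  fun j => β⁻¹ • M • ∑ n' ∈ Finset.range (k + 1), μ n' • V (j - ((k : ℤ) - (n' : ℤ)) * q)

/-- The operator `Δ₀` on the grid `p⁻¹ℤ` (a shift by `m ∈ ℤ_{>0}` is `m·p` grid steps). -/
def Δ0Y {d : ℕ} (τ : ℝ) (α : ℕ → Vec d) (p : ℕ) (V : ℤ → Vec d) : ℤ → Vec d :=
  fun j i => τ * ∑' m : ℕ, α (m + 1) i *
    (V (j + ((m : ℤ) + 1) * p) i + V (j - ((m : ℤ) + 1) * p) i - 2 * V j i)

/-- The linearised fully discrete operator `L_{k,M} : 𝒴¹_{k,M} → 𝒴_M`. -/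
def LkMop {d : ℕ} (τ c0 : ℝ) (α : ℕ → Vec d) (G : Vec d → ℝ → Vec d) (U0 : ℝ → Vec d)
    (r : ℝ) (k : ℕ) (μ : ℕ → ℝ) (β : ℝ) (p q : ℕ) (V : ℤ → Vec d) : ℤ → Vec d :=
  fun j => c0 • DkY k μ β ((p : ℝ) / q) q V j - Δ0Y τ α p V j
    - (DUG G (U0 ((j : ℝ) / p)) r).mulVec (V j)

/-- Restriction of a continuum function to the grid `p⁻¹ℤ`. -/
def restrY {d : ℕ} (p : ℕ) (f : ℝ → Vec d) : ℤ → Vec d := fun j => f ((j : ℝ) / p)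

/-! ### The spaces `ℓ²_{q,⊥}`, `ℋ_M` and the associated operators -/

/-- The `ℓ²_{q,⊥}` inner product on maps `q⁻¹{0,…,q} → ℝ^d` (indexed by `Fin (q+1)`). -/
def innerPerp {d : ℕ} (q : ℕ) (Φ Ψ : Fin (q + 1) → Vec d) : ℝ :=
  (q : ℝ)⁻¹ * ((1 / 2) * dotV (Φ 0) (Ψ 0) + (1 / 2) * dotV (Φ (Fin.last q)) (Ψ (Fin.last q))
    + ∑ ζ ∈ Finset.Ioo (0 : Fin (q + 1)) (Fin.last q), dotV (Φ ζ) (Ψ ζ))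

/-- Index reduction `ℤ → Fin (q+1)` by the representative in `{0,…,q−1}`. -/
def zmodIdx (q : ℕ) (hq : 0 < q) (j : ℤ) : Fin (q + 1) :=
  ⟨(j % (q : ℤ)).toNat, by
    have h2 : j % (q : ℤ) < (q : ℤ) := Int.emod_lt_of_pos j (by exact_mod_cast hq)
    have h1 : 0 ≤ j % (q : ℤ) := Int.emod_nonneg j (by exact_mod_cast hq.ne')
    omega⟩

/-- Extension of an element of `ℋ_M` to all `ζ ∈ q⁻¹ℤ` via the convention
`Φ(ζ±1, ξ) = Φ(ζ, ξ±M⁻¹)`; here `j` is the `ζ`-index in units of `q⁻¹` and `l` the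
`ξ`-index in units of `M⁻¹`. -/
def extH {d : ℕ} (q : ℕ) (hq : 0 < q) (Φ : Fin (q + 1) → ℤ → Vec d) : ℤ → ℤ → Vec d :=
  fun j l => Φ (zmodIdx q hq j) (l + j / (q : ℤ))

/-- The compatibility constraint for `ℋ_M`: `Φ(1,ξ) = Φ(0, ξ + M⁻¹)`. -/
def HConstraint {d : ℕ} (q : ℕ) (Φ : Fin (q + 1) → ℤ → Vec d) : Prop :=
  ∀ l : ℤ, Φ (Fin.last q) l = Φ 0 (l + 1)

/-- Inner product on `ℋ_M`. -/
def innerH {d : ℕ} (q : ℕ) (M : ℝ) (Φ Ψ : Fin (q + 1) → ℤ → Vec d) : ℝ :=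
  M⁻¹ * ∑' l : ℤ, innerPerp q (fun ζ => Φ ζ l) (fun ζ => Ψ ζ l)

/-- Membership in `ℋ_M`. -/
def MemH {d : ℕ} (q : ℕ) (Φ : Fin (q + 1) → ℤ → Vec d) : Prop :=
  Summable fun l : ℤ => innerPerp q (fun ζ => Φ ζ l) (fun ζ => Φ ζ l)

/-- Norm on `ℋ_M`. -/
def normH {d : ℕ} (q : ℕ) (M : ℝ) (Φ : Fin (q + 1) → ℤ → Vec d) : ℝ :=
  Real.sqrt (innerH q M Φ Φ)

/-- The BDF discrete derivative on `ℋ_M`, acting in the second variable. -/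
def DkH {d : ℕ} (q k : ℕ) (μ : ℕ → ℝ) (β M : ℝ) (Φ : Fin (q + 1) → ℤ → Vec d) :
    Fin (q + 1) → ℤ → Vec d :=
  fun ζ l => β⁻¹ • M • ∑ n' ∈ Finset.range (k + 1), μ n' • Φ ζ (l - ((k : ℤ) - (n' : ℤ)))

/-- The adjoint BDF discrete derivative on `ℋ_M`. -/
def DkHstar {d : ℕ} (q k : ℕ) (μ : ℕ → ℝ) (β M : ℝ) (Φ : Fin (q + 1) → ℤ → Vec d) :
    Fin (q + 1) → ℤ → Vec d :=
  fun ζ l => β⁻¹ • M • ∑ n' ∈ Finset.range (k + 1), μ n' • Φ ζ (l + ((k : ℤ) - (n' : ℤ)))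

/-- Norm on `ℋ¹_{k,M}`. -/
def normH1 {d : ℕ} (q k : ℕ) (μ : ℕ → ℝ) (β M : ℝ) (Φ : Fin (q + 1) → ℤ → Vec d) : ℝ :=
  Real.sqrt (innerH q M Φ Φ + innerH q M (DkH q k μ β M Φ) (DkH q k μ β M Φ))

/-- The operator `Δ_M` on `ℋ_M`, with twist data `t = θq ∈ {1,…,q}` and `n` satisfying
`p = nq + t`, i.e. `1 = (n+θ)M⁻¹`. -/
def ΔMop {d : ℕ} (q : ℕ) (hq : 0 < q) (τ : ℝ) (α : ℕ → Vec d) (t n : ℤ)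
    (Φ : Fin (q + 1) → ℤ → Vec d) : Fin (q + 1) → ℤ → Vec d :=
  fun ζ l i => τ * ∑' m : ℕ, α (m + 1) i *
    (extH q hq Φ (((ζ : ℕ) : ℤ) + ((m : ℤ) + 1) * t) (l + ((m : ℤ) + 1) * n) i
      + extH q hq Φ (((ζ : ℕ) : ℤ) - ((m : ℤ) + 1) * t) (l - ((m : ℤ) + 1) * n) i
      - 2 * Φ ζ l i)

/-- The fully discrete linearised operator `𝒦_{k,M} : ℋ¹_{k,M} → ℋ_M`. -/
def KkM {d : ℕ} (q : ℕ) (hq : 0 < q) (τ c0 : ℝ) (α : ℕ → Vec d) (G : Vec d → ℝ → Vec d)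
    (U0 : ℝ → Vec d) (r : ℝ) (k : ℕ) (μ : ℕ → ℝ) (β : ℝ) (p : ℕ) (t n : ℤ)
    (Φ : Fin (q + 1) → ℤ → Vec d) : Fin (q + 1) → ℤ → Vec d :=
  fun ζ l => c0 • DkH q k μ β ((p : ℝ) / q) Φ ζ l - ΔMop q hq τ α t n Φ ζ l
    - (DUG G (U0 (((l * (q : ℤ) + ((ζ : ℕ) : ℤ) : ℤ) : ℝ) / p)) r).mulVec (Φ ζ l)

/-- The adjoint fully discrete operator `𝒦*_{k,M}`. -/
def KkMstar {d : ℕ} (q : ℕ) (hq : 0 < q) (τ c0 : ℝ) (α : ℕ → Vec d) (G : Vec d → ℝ → Vec d)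
    (U0 : ℝ → Vec d) (r : ℝ) (k : ℕ) (μ : ℕ → ℝ) (β : ℝ) (p : ℕ) (t n : ℤ)
    (Φ : Fin (q + 1) → ℤ → Vec d) : Fin (q + 1) → ℤ → Vec d :=
  fun ζ l => c0 • DkHstar q k μ β ((p : ℝ) / q) Φ ζ l - ΔMop q hq τ α t n Φ ζ l
    - (DUG G (U0 (((l * (q : ℤ) + ((ζ : ℕ) : ℤ) : ℤ) : ℝ) / p)) r).transpose.mulVec (Φ ζ l)

/-- Sampling of a continuum function into `ℋ_M`: `[π_{ℋ_M}f](ζ,ξ) = f(ξ + ζM⁻¹)`. -/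
def piH {d : ℕ} (q p : ℕ) (f : ℝ → Vec d) : Fin (q + 1) → ℤ → Vec d :=
  fun ζ l => f (((l * (q : ℤ) + ((ζ : ℕ) : ℤ) : ℤ) : ℝ) / p)

/-- The twist datum `t = θ(M)·q ∈ {1,…,q}` associated with `M = p/q`. -/
def tOf (q p : ℕ) : ℤ := if p % q = 0 then (q : ℤ) else ((p % q : ℕ) : ℤ)

/-- The integer `n(M)` with `1 = (n + θ)M⁻¹`, i.e. `p = n q + t`. -/
def nOf (q p : ℕ) : ℤ := ((p : ℤ) - tOf q p) / (q : ℤ)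

/-! ### The limiting operators on `H¹(ℝ, ℓ²_{q,⊥;∞})` -/

/-- Periodic extension in `ζ` of a function `Θ(ζ,ξ)` using the convention
`Θ(ζ+1,ξ) = Θ(ζ,ξ)`. -/
def extPer {d : ℕ} (q : ℕ) (hq : 0 < q) (Θ : Fin (q + 1) → ℝ → Vec d) : ℤ → ℝ → Vec d :=
  fun j ξ => Θ (zmodIdx q hq j) ξ

/-- Complex version of `extPer`. -/
def extPerC {d : ℕ} (q : ℕ) (hq : 0 < q) (Θ : Fin (q + 1) → ℝ → VecC d) : ℤ → ℝ → VecC d :=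
  fun j ξ => Θ (zmodIdx q hq j) ξ

/-- The operator `Δ_{q,θ}` with twist datum `t = θ q`. -/
def ΔQθ {d : ℕ} (q : ℕ) (hq : 0 < q) (τ : ℝ) (α : ℕ → Vec d) (t : ℤ)
    (Θ : Fin (q + 1) → ℝ → Vec d) : Fin (q + 1) → ℝ → Vec d :=
  fun ζ ξ i => τ * ∑' m : ℕ, α (m + 1) i *
    (extPer q hq Θ (((ζ : ℕ) : ℤ) + ((m : ℤ) + 1) * t) (ξ + ((m : ℝ) + 1)) i
      + extPer q hq Θ (((ζ : ℕ) : ℤ) - ((m : ℤ) + 1) * t) (ξ - ((m : ℝ) + 1)) i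
      - 2 * Θ ζ ξ i)

/-- Complex version of `Δ_{q,θ}`. -/
def ΔQθC {d : ℕ} (q : ℕ) (hq : 0 < q) (τ : ℝ) (α : ℕ → Vec d) (t : ℤ)
    (Θ : Fin (q + 1) → ℝ → VecC d) : Fin (q + 1) → ℝ → VecC d :=
  fun ζ ξ i => (τ : ℂ) * ∑' m : ℕ, ((α (m + 1) i : ℝ) : ℂ) *
    (extPerC q hq Θ (((ζ : ℕ) : ℤ) + ((m : ℤ) + 1) * t) (ξ + ((m : ℝ) + 1)) i
      + extPerC q hq Θ (((ζ : ℕ) : ℤ) - ((m : ℤ) + 1) * t) (ξ - ((m : ℝ) + 1)) i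
      - 2 * Θ ζ ξ i)

/-- The limiting operator `𝒦̄_{q,θ} Θ = c̄₀ ∂_ξ Θ − Δ_{q,θ} Θ − D_U G(Ū₀(ξ); r̄) Θ`,
evaluated on a pair `(Θ, Θ')`. -/
def Kbar {d : ℕ} (q : ℕ) (hq : 0 < q) (τ c0 : ℝ) (α : ℕ → Vec d) (G : Vec d → ℝ → Vec d)
    (U0 : ℝ → Vec d) (r : ℝ) (t : ℤ) (Θ Θ' : Fin (q + 1) → ℝ → Vec d) :
    Fin (q + 1) → ℝ → Vec d :=
  fun ζ ξ => c0 • Θ' ζ ξ - ΔQθ q hq τ α t Θ ζ ξ - (DUG G (U0 ξ) r).mulVec (Θ ζ ξ)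

/-- The formal adjoint `𝒦̄*_{q,θ}`. -/
def KbarStar {d : ℕ} (q : ℕ) (hq : 0 < q) (τ c0 : ℝ) (α : ℕ → Vec d)
    (G : Vec d → ℝ → Vec d) (U0 : ℝ → Vec d) (r : ℝ) (t : ℤ)
    (Θ Θ' : Fin (q + 1) → ℝ → Vec d) : Fin (q + 1) → ℝ → Vec d :=
  fun ζ ξ => (-c0) • Θ' ζ ξ - ΔQθ q hq τ α t Θ ζ ξ
    - (DUG G (U0 ξ) r).transpose.mulVec (Θ ζ ξ)

/-- Complexification of `𝒦̄_{q,θ} + λ`. -/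
def KbarC {d : ℕ} (q : ℕ) (hq : 0 < q) (τ c0 : ℝ) (α : ℕ → Vec d) (G : Vec d → ℝ → Vec d)
    (U0 : ℝ → Vec d) (r : ℝ) (t : ℤ) (lam : ℂ) (Θ Θ' : Fin (q + 1) → ℝ → VecC d) :
    Fin (q + 1) → ℝ → VecC d :=
  fun ζ ξ i => (c0 : ℂ) * Θ' ζ ξ i - ΔQθC q hq τ α t Θ ζ ξ i
    - ∑ j, ((DUG G (U0 ξ) r i j : ℝ) : ℂ) * Θ ζ ξ j + lam * Θ ζ ξ i

/-- Membership of a pair `(Θ, Θ')` in `H¹(ℝ, ℓ²_{q,⊥;∞})`. -/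
def IsH1perp {d : ℕ} (q : ℕ) (Θ Θ' : Fin (q + 1) → ℝ → Vec d) : Prop :=
  (∀ ζ, IsH1 (Θ ζ) (Θ' ζ)) ∧ (∀ ξ : ℝ, Θ (Fin.last q) ξ = Θ 0 ξ) ∧
    (∀ ξ : ℝ, Θ' (Fin.last q) ξ = Θ' 0 ξ)

/-- Complex version of `IsH1perp`. -/
def IsH1perpC {d : ℕ} (q : ℕ) (Θ Θ' : Fin (q + 1) → ℝ → VecC d) : Prop :=
  (∀ ζ, IsH1C (Θ ζ) (Θ' ζ)) ∧ (∀ ξ : ℝ, Θ (Fin.last q) ξ = Θ 0 ξ) ∧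
    (∀ ξ : ℝ, Θ' (Fin.last q) ξ = Θ' 0 ξ)

/-- Membership of `Θ` in `L²(ℝ, ℓ²_{q,⊥;∞})`. -/
def MemL2perp {d : ℕ} (q : ℕ) (Θ : Fin (q + 1) → ℝ → Vec d) : Prop :=
  (∀ ζ, MemLp (Θ ζ) 2 (volume : Measure ℝ)) ∧ (∀ ξ : ℝ, Θ (Fin.last q) ξ = Θ 0 ξ)

/-- The `L²(ℝ, ℓ²_{q,⊥})` pairing. -/
def innerL2perp {d : ℕ} (q : ℕ) (Θ Ψ : Fin (q + 1) → ℝ → Vec d) : ℝ :=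
  ∫ ξ : ℝ, innerPerp q (fun ζ => Θ ζ ξ) (fun ζ => Ψ ζ ξ)

/-- The `H¹(ℝ, ℓ²_{q,⊥})` norm of a pair `(Θ, Θ')`. -/
def normH1perp {d : ℕ} (q : ℕ) (Θ Θ' : Fin (q + 1) → ℝ → Vec d) : ℝ :=
  Real.sqrt (innerL2perp q Θ Θ + innerL2perp q Θ' Θ')

/-- The `L²(ℝ, ℓ²_{q,⊥})` norm. -/
def normL2perp {d : ℕ} (q : ℕ) (Θ : Fin (q + 1) → ℝ → Vec d) : ℝ :=
  Real.sqrt (innerL2perp q Θ Θ)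

/-- The embedding `[π_⊥ f](ζ, ξ) = f(ξ)`. -/
def piPerp {d : ℕ} (q : ℕ) (f : ℝ → Vec d) : Fin (q + 1) → ℝ → Vec d := fun _ ξ => f ξ

/-! ### Characteristic matrices and operators -/

/-- `A(y)`: diagonal entries `A_i(y) = Σ_{m>0} α_m^{(i,i)}(1 − cos(my))`. -/
def Afun {d : ℕ} (α : ℕ → Vec d) (y : ℝ) : Fin d → ℝ :=
  fun i => ∑' m : ℕ, α (m + 1) i * (1 - Real.cos (((m : ℝ) + 1) * y))

/-- The averaged Jacobian `DG_ρ = ρ D_U G(P⁻; r̄) + (1−ρ) D_U G(P⁺; r̄)`. -/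
def DGrho {d : ℕ} (G : Vec d → ℝ → Vec d) (Pm Pp : Vec d) (r ρ : ℝ) :
    Matrix (Fin d) (Fin d) ℝ :=
  ρ • DUG G Pm r + (1 - ρ) • DUG G Pp r

/-- The characteristic matrix `Δ_{ρ;λ}(iy) = c̄₀ i y I + 2τ A(y) − DG_ρ + λ I`. -/
def charMat {d : ℕ} (τ c0 : ℝ) (α : ℕ → Vec d) (G : Vec d → ℝ → Vec d) (Pm Pp : Vec d)
    (r ρ y : ℝ) (lam : ℂ) : Matrix (Fin d) (Fin d) ℂ :=
  fun i j => (if i = j then (c0 : ℂ) * (y : ℂ) * Complex.I + lam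
      + 2 * (τ : ℂ) * ((Afun α y i : ℝ) : ℂ) else 0)
    - ((DGrho G Pm Pp r ρ i j : ℝ) : ℂ)

/-- Periodic extension of an element of (the complexification of) `ℓ²_{q,⊥;∞}`. -/
def extFinC {d : ℕ} (q : ℕ) (hq : 0 < q) (V : Fin (q + 1) → VecC d) : ℤ → VecC d :=
  fun j => V (zmodIdx q hq j)

/-- The characteristic operator `Δ_{q,θ,ρ;λ}(iy)` on the complexification of `ℓ²_{q,⊥;∞}`,
with twist datum `t = θq`. -/
def charOp {d : ℕ} (q : ℕ) (hq : 0 < q) (τ c0 : ℝ) (α : ℕ → Vec d)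
    (G : Vec d → ℝ → Vec d) (Pm Pp : Vec d) (r ρ : ℝ) (t : ℤ) (y : ℝ) (lam : ℂ)
    (V : Fin (q + 1) → VecC d) : Fin (q + 1) → VecC d :=
  fun ζ i => ((c0 : ℂ) * (y : ℂ) * Complex.I + lam) * V ζ i
    - (τ : ℂ) * ∑' m : ℕ, ((α (m + 1) i : ℝ) : ℂ) *
        (Complex.exp (Complex.I * ((m : ℝ) + 1) * y) *
            extFinC q hq V (((ζ : ℕ) : ℤ) + ((m : ℤ) + 1) * t) i
          + Complex.exp (-(Complex.I * ((m : ℝ) + 1) * y)) *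
            extFinC q hq V (((ζ : ℕ) : ℤ) - ((m : ℤ) + 1) * t) i
          - 2 * V ζ i)
    - ∑ j, ((DGrho G Pm Pp r ρ i j : ℝ) : ℂ) * V ζ j

/-! ### Interpolation operators -/

/-- The order-zero interpolation `ℐ⁰_M`. -/
def I0interp {d : ℕ} (q : ℕ) (M : ℝ) (Φ : Fin (q + 1) → ℤ → Vec d) :
    Fin (q + 1) → ℝ → Vec d :=
  fun ζ ξ => Φ ζ ⌊M * ξ⌋

/-- The order-one (piecewise linear) interpolation `ℐ¹_{k,M}`. -/
def I1interp {d : ℕ} (q : ℕ) (M : ℝ) (Φ : Fin (q + 1) → ℤ → Vec d) :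
    Fin (q + 1) → ℝ → Vec d :=
  fun ζ ξ => M • ((ξ - (⌊M * ξ⌋ : ℝ) / M) • Φ ζ (⌊M * ξ⌋ + 1)
    + (((⌊M * ξ⌋ : ℝ) + 1) / M - ξ) • Φ ζ ⌊M * ξ⌋)

/-- The a.e. derivative of the piecewise linear interpolation. -/
def I1deriv {d : ℕ} (q : ℕ) (M : ℝ) (Φ : Fin (q + 1) → ℤ → Vec d) :
    Fin (q + 1) → ℝ → Vec d :=
  fun ζ ξ => M • (Φ ζ (⌊M * ξ⌋ + 1) - Φ ζ ⌊M * ξ⌋)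

/-! ### `Δ_M` acting on continuum functions (for the convergence lemma) -/

/-- Extension of a continuum function `Θ(ζ,ξ)` via the convention
`Θ(ζ±1,ξ) = Θ(ζ, ξ±M⁻¹)`, where `Minv = M⁻¹`. -/
def extContM {d : ℕ} (q : ℕ) (hq : 0 < q) (Minv : ℝ) (Θ : Fin (q + 1) → ℝ → Vec d) :
    ℤ → ℝ → Vec d :=
  fun j ξ => Θ (zmodIdx q hq j) (ξ + ((j / (q : ℤ) : ℤ) : ℝ) * Minv)

/-- The operator `Δ_M` acting on continuum functions of `(ζ, ξ)`, with twist data `(t, n)`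
and `Minv = M⁻¹`. -/
def ΔMcont {d : ℕ} (q : ℕ) (hq : 0 < q) (τ : ℝ) (α : ℕ → Vec d) (t n : ℤ) (Minv : ℝ)
    (Θ : Fin (q + 1) → ℝ → Vec d) : Fin (q + 1) → ℝ → Vec d :=
  fun ζ ξ i => τ * ∑' m : ℕ, α (m + 1) i *
    (extContM q hq Minv Θ (((ζ : ℕ) : ℤ) + ((m : ℤ) + 1) * t)
        (ξ + ((m : ℝ) + 1) * (n : ℝ) * Minv) i
      + extContM q hq Minv Θ (((ζ : ℕ) : ℤ) - ((m : ℤ) + 1) * t)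
        (ξ - ((m : ℝ) + 1) * (n : ℝ) * Minv) i
      - 2 * Θ ζ ξ i)

/-! ### The quantities `ℰ_{k,M}(δ)`, `κ(δ)` and the resolvent bound -/

/-- The quantity `ℰ_{k,M}(δ)` from the spectral convergence method. -/
def EkM {d : ℕ} (q : ℕ) (hq : 0 < q) (τ c0 : ℝ) (α : ℕ → Vec d) (G : Vec d → ℝ → Vec d)
    (U0 : ℝ → Vec d) (r : ℝ) (k : ℕ) (μ : ℕ → ℝ) (β : ℝ) (Φm : ℝ → Vec d)
    (p : ℕ) (δ : ℝ) : ℝ :=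
  sInf { x : ℝ | ∃ Φ : Fin (q + 1) → ℤ → Vec d, HConstraint q Φ ∧ MemH q Φ ∧
    normH1 q k μ β ((p : ℝ) / q) Φ = 1 ∧
    x = normH q ((p : ℝ) / q)
          (fun ζ l => KkM q hq τ c0 α G U0 r k μ β p (tOf q p) (nOf q p) Φ ζ l + δ • Φ ζ l)
      + δ⁻¹ * |innerH q ((p : ℝ) / q) (piH q p Φm)
          (fun ζ l => KkM q hq τ c0 α G U0 r k μ β p (tOf q p) (nOf q p) Φ ζ l + δ • Φ ζ l)| }

/-- The quantity `ℰ*_{k,M}(δ)`, defined analogously with `𝒦*_{k,M}` and `Φ₀⁺`. -/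
def EkMstar {d : ℕ} (q : ℕ) (hq : 0 < q) (τ c0 : ℝ) (α : ℕ → Vec d) (G : Vec d → ℝ → Vec d)
    (U0 : ℝ → Vec d) (r : ℝ) (k : ℕ) (μ : ℕ → ℝ) (β : ℝ) (Φp : ℝ → Vec d)
    (p : ℕ) (δ : ℝ) : ℝ :=
  sInf { x : ℝ | ∃ Φ : Fin (q + 1) → ℤ → Vec d, HConstraint q Φ ∧ MemH q Φ ∧
    normH1 q k μ β ((p : ℝ) / q) Φ = 1 ∧
    x = normH q ((p : ℝ) / q)
          (fun ζ l => KkMstar q hq τ c0 α G U0 r k μ β p (tOf q p) (nOf q p) Φ ζ l + δ • Φ ζ l)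
      + δ⁻¹ * |innerH q ((p : ℝ) / q) (piH q p Φp)
          (fun ζ l => KkMstar q hq τ c0 α G U0 r k μ β p (tOf q p) (nOf q p) Φ ζ l + δ • Φ ζ l)| }

/-- `κ(δ) = liminf_{M → ∞, M ∈ ℳ_q} ℰ_{k,M}(δ)`. -/
def kappaE {d : ℕ} (q : ℕ) (hq : 0 < q) (τ c0 : ℝ) (α : ℕ → Vec d) (G : Vec d → ℝ → Vec d)
    (U0 : ℝ → Vec d) (r : ℝ) (k : ℕ) (μ : ℕ → ℝ) (β : ℝ) (Φm : ℝ → Vec d) (δ : ℝ) : ℝ :=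
  Filter.liminf (fun p : ℕ => EkM q hq τ c0 α G U0 r k μ β Φm p δ)
    (Filter.atTop ⊓ Filter.principal {p : ℕ | Nat.Coprime p q ∧ q ≤ p})

/-- `κ*(δ) = liminf_{M → ∞, M ∈ ℳ_q} ℰ*_{k,M}(δ)`. -/
def kappaEstar {d : ℕ} (q : ℕ) (hq : 0 < q) (τ c0 : ℝ) (α : ℕ → Vec d)
    (G : Vec d → ℝ → Vec d) (U0 : ℝ → Vec d) (r : ℝ) (k : ℕ) (μ : ℕ → ℝ) (β : ℝ)
    (Φp : ℝ → Vec d) (δ : ℝ) : ℝ :=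
  Filter.liminf (fun p : ℕ => EkMstar q hq τ c0 α G U0 r k μ β Φp p δ)
    (Filter.atTop ⊓ Filter.principal {p : ℕ | Nat.Coprime p q ∧ q ≤ p})

/-- The resolvent bound for the limiting operator `𝒦̄_{q,θ}` (with twist datum `t = θq`):
for `0 < δ < δ0`, `𝒦̄_{q,θ} + δ` is surjective onto `L²(ℝ,ℓ²_{q,⊥;∞})` and every solution
obeys the `H¹` estimate with constant `C`. -/
def ResolventBound {d : ℕ} (q : ℕ) (hq : 0 < q) (τ c0 : ℝ) (α : ℕ → Vec d)
    (G : Vec d → ℝ → Vec d) (U0 : ℝ → Vec d) (r : ℝ) (t : ℤ) (Φm : ℝ → Vec d)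
    (C δ0 : ℝ) : Prop :=
  ∀ δ : ℝ, 0 < δ → δ < δ0 →
    (∀ Θ : Fin (q + 1) → ℝ → Vec d, MemL2perp q Θ →
      ∃ Φ Φ' : Fin (q + 1) → ℝ → Vec d, IsH1perp q Φ Φ' ∧
        ∀ᵐ ξ ∂(volume : Measure ℝ), ∀ ζ,
          Kbar q hq τ c0 α G U0 r t Φ Φ' ζ ξ + δ • Φ ζ ξ = Θ ζ ξ) ∧
    (∀ Θ Φ Φ' : Fin (q + 1) → ℝ → Vec d, MemL2perp q Θ → IsH1perp q Φ Φ' →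
      (∀ᵐ ξ ∂(volume : Measure ℝ), ∀ ζ,
          Kbar q hq τ c0 α G U0 r t Φ Φ' ζ ξ + δ • Φ ζ ξ = Θ ζ ξ) →
      normH1perp q Φ Φ' ≤ C * (normL2perp q Θ + δ⁻¹ * |innerL2perp q Θ (piPerp q Φm)|))

/-- The second derivative `D²G(U;r)[a,b]` of the nonlinearity. -/
def D2G {d : ℕ} (G : Vec d → ℝ → Vec d) (U : Vec d) (r : ℝ) (a b : Vec d) : Vec d :=
  fun i => fderiv ℝ (fun V => fderiv ℝ (fun W => G W r i) V a) U b

/-- The quasi-inverse `L₀^{qinv} G = L₀⁻¹[G − (⟨Φ₀⁻,G⟩/⟨Φ₀⁻,Φ₀⁺⟩) Φ₀⁺]`, built from a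
given inverse `Linv` of the restriction `L₀ : X₀ → Y₀`. -/
def qinvOf {d : ℕ} (Linv : (ℝ → Vec d) → (ℝ → Vec d)) (Φp Φm : ℝ → Vec d)
    (Gf : ℝ → Vec d) : ℝ → Vec d :=
  Linv (fun ξ => Gf ξ - (innerL2 Φm Gf / innerL2 Φm Φp) • Φp ξ)

/-! ### Auxiliary lemmas for Statement 3 -/

lemma dotV_nonneg {d : ℕ} (x : Vec d) : 0 ≤ dotV x x :=
  Finset.sum_nonneg fun i _ => mul_self_nonneg _

lemma dotV_smul_quad {d : ℕ} (M : Matrix (Fin d) (Fin d) ℝ) (c : ℝ) (x : Vec d) :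
    dotV (c • x) (M.mulVec (c • x)) = c ^ 2 * dotV x (M.mulVec x) := by
  simp only [dotV, Matrix.mulVec_smul, Pi.smul_apply, smul_eq_mul, Finset.mul_sum]
  exact Finset.sum_congr rfl fun i _ => by ring

lemma continuous_quad {d : ℕ} (M : Matrix (Fin d) (Fin d) ℝ) :
    Continuous (fun x : Vec d => dotV x (M.mulVec x)) := by
  unfold dotV Matrix.mulVec dotProduct
  exact continuous_finset_sum _ fun i _ => (continuous_apply i).mul
    (continuous_finset_sum _ fun j _ => continuous_const.mul (continuous_apply j))

lemma posdefq_coercive {d : ℕ} (hd : 0 < d) {M : Matrix (Fin d) (Fin d) ℝ}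
    (hM : PosDefQ M) : ∃ κ : ℝ, 0 < κ ∧ ∀ x : Vec d, κ * dotV x x ≤ dotV x (M.mulVec x) := by
  haveI : Nonempty (Fin d) := ⟨⟨0, hd⟩⟩
  have hsph : (Metric.sphere (0 : Vec d) 1).Nonempty :=
    NormedSpace.sphere_nonempty.mpr zero_le_one
  obtain ⟨x0, hx0mem, hmin⟩ := (isCompact_sphere (0 : Vec d) 1).exists_isMinOn hsph
    (continuous_quad M).continuousOn
  have hx0ne : x0 ≠ 0 := by
    intro h
    have := mem_sphere_zero_iff_norm.mp hx0mem
    rw [h] at this; simp at this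
  set κ' : ℝ := dotV x0 (M.mulVec x0) with hκ'
  have hκ'pos : 0 < κ' := hM x0 hx0ne
  refine ⟨κ' / d, div_pos hκ'pos (by exact_mod_cast hd), fun x => ?_⟩
  by_cases hx : x = 0
  · simp [hx, dotV, Matrix.mulVec_zero]
  · have hnx : (0 : ℝ) < ‖x‖ := norm_pos_iff.mpr hx
    set u : Vec d := ‖x‖⁻¹ • x with hu
    have humem : u ∈ Metric.sphere (0 : Vec d) 1 := by
      rw [mem_sphere_zero_iff_norm, hu, norm_smul]
      simp [abs_of_pos (inv_pos.mpr hnx), inv_mul_cancel₀ hnx.ne']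
    have hxu : x = ‖x‖ • u := by
      rw [hu, smul_smul, mul_inv_cancel₀ hnx.ne', one_smul]
    have h1 : κ' ≤ dotV u (M.mulVec u) := hmin humem
    have h2 : dotV x (M.mulVec x) = ‖x‖ ^ 2 * dotV u (M.mulVec u) := by
      conv_lhs => rw [hxu]
      rw [dotV_smul_quad]
    have h3 : dotV x x ≤ (d : ℝ) * ‖x‖ ^ 2 := by
      have : ∀ i : Fin d, x i * x i ≤ ‖x‖ ^ 2 := by
        intro i
        have hle : |x i| ≤ ‖x‖ := by
          simpa [Real.norm_eq_abs] using norm_le_pi_norm x i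
        calc x i * x i = |x i| ^ 2 := by rw [sq_abs]; ring
          _ ≤ ‖x‖ ^ 2 := by
              apply pow_le_pow_left₀ (abs_nonneg _) hle
      calc dotV x x ≤ ∑ _i : Fin d, ‖x‖ ^ 2 := Finset.sum_le_sum fun i _ => this i
        _ = (d : ℝ) * ‖x‖ ^ 2 := by simp [Finset.sum_const, mul_comm]
    calc κ' / d * dotV x x ≤ κ' / d * ((d : ℝ) * ‖x‖ ^ 2) := by
          apply mul_le_mul_of_nonneg_left h3 (le_of_lt (div_pos hκ'pos (by exact_mod_cast hd)))
      _ = κ' * ‖x‖ ^ 2 := by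
          field_simp
      _ ≤ ‖x‖ ^ 2 * dotV u (M.mulVec u) := by
          rw [mul_comm]
          exact mul_le_mul_of_nonneg_left h1 (by positivity)
      _ = dotV x (M.mulVec x) := h2.symm

lemma dgrho_coercive {d : ℕ} (hd : 0 < d) {G : Vec d → ℝ → Vec d} {Pm Pp : Vec d} {r : ℝ}
    (h : HS3a G Pm Pp r) :
    ∃ κ : ℝ, 0 < κ ∧ ∀ ρ ∈ Set.Icc (0 : ℝ) 1, ∀ x : Vec d,
      dotV x ((DGrho G Pm Pp r ρ).mulVec x) ≤ -κ * dotV x x := by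
  obtain ⟨κ1, hκ1, hb1⟩ := posdefq_coercive hd h.1
  obtain ⟨κ2, hκ2, hb2⟩ := posdefq_coercive hd h.2
  refine ⟨min κ1 κ2, lt_min hκ1 hκ2, fun ρ hρ x => ?_⟩
  have e1 : ∀ x : Vec d, dotV x ((DUG G Pm r).mulVec x) ≤ -κ1 * dotV x x := by
    intro x
    have := hb1 x
    have hneg : dotV x ((-(DUG G Pm r)).mulVec x) = -dotV x ((DUG G Pm r).mulVec x) := by
      simp [dotV, Matrix.neg_mulVec, Pi.neg_apply, Finset.sum_neg_distrib, mul_neg]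
    linarith [hneg ▸ this]
  have e2 : ∀ x : Vec d, dotV x ((DUG G Pp r).mulVec x) ≤ -κ2 * dotV x x := by
    intro x
    have := hb2 x
    have hneg : dotV x ((-(DUG G Pp r)).mulVec x) = -dotV x ((DUG G Pp r).mulVec x) := by
      simp [dotV, Matrix.neg_mulVec, Pi.neg_apply, Finset.sum_neg_distrib, mul_neg]
    linarith [hneg ▸ this]
  have hsplit : dotV x ((DGrho G Pm Pp r ρ).mulVec x)
      = ρ * dotV x ((DUG G Pm r).mulVec x) + (1 - ρ) * dotV x ((DUG G Pp r).mulVec x) := by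
    simp only [DGrho, dotV, Matrix.add_mulVec, Matrix.smul_mulVec, Pi.add_apply,
      Pi.smul_apply, smul_eq_mul, Finset.mul_sum, ← Finset.sum_add_distrib]
    exact Finset.sum_congr rfl fun i _ => by ring
  have hxx := dotV_nonneg x
  have hρ0 := hρ.1
  have hρ1 := hρ.2
  have hm1 : min κ1 κ2 ≤ κ1 := min_le_left _ _
  have hm2 : min κ1 κ2 ≤ κ2 := min_le_right _ _
  have t1 : ρ * dotV x ((DUG G Pm r).mulVec x) ≤ ρ * (-κ1 * dotV x x) :=
    mul_le_mul_of_nonneg_left (e1 x) hρ0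
  have t2 : (1 - ρ) * dotV x ((DUG G Pp r).mulVec x) ≤ (1 - ρ) * (-κ2 * dotV x x) :=
    mul_le_mul_of_nonneg_left (e2 x) (by linarith)
  rw [hsplit]
  nlinarith [mul_nonneg hρ0 hxx, mul_nonneg (by linarith : (0:ℝ) ≤ 1 - ρ) hxx]

lemma Afun_nonneg {d ddiff : ℕ} {τ ν : ℝ} {α : ℕ → Vec d} (h : HS1 d ddiff τ α ν)
    (i : Fin d) (y : ℝ) : 0 ≤ Afun α y i := by
  by_cases hi : (i : ℕ) < ddiff
  · have hT : (0 : ℝ) < 2 * Real.pi := by positivity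
    set k : ℤ := ⌊y / (2 * Real.pi)⌋ with hk
    set y0 : ℝ := y - (k : ℝ) * (2 * Real.pi) with hy0def
    have hy0 : 0 ≤ y0 := Int.sub_floor_div_mul_nonneg y hT
    have hy0' : y0 < 2 * Real.pi := Int.sub_floor_div_mul_lt y hT
    have hcong : ∀ m : ℕ, Real.cos (((m : ℝ) + 1) * y) = Real.cos (((m : ℝ) + 1) * y0) := by
      intro m
      have hrw : ((m : ℝ) + 1) * y
          = ((m : ℝ) + 1) * y0 + ((((m : ℤ) + 1) * k : ℤ) : ℝ) * (2 * Real.pi) := by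
        rw [hy0def]; push_cast; ring
      rw [hrw, Real.cos_add_int_mul_two_pi]
    have heq : Afun α y i = Afun α y0 i := by
      unfold Afun
      exact tsum_congr fun m => by rw [hcong m]
    rw [heq]
    rcases eq_or_lt_of_le hy0 with h0 | h0
    · have hz : ∀ m : ℕ, α (m + 1) i * (1 - Real.cos (((m : ℝ) + 1) * y0)) = 0 := by
        intro m; rw [← h0]; simp
      unfold Afun
      rw [tsum_congr hz, tsum_zero]
    · exact le_of_lt (h.A_pos i hi y0 h0 hy0')
  · push_neg at hi
    have hz : ∀ m : ℕ, α (m + 1) i * (1 - Real.cos (((m : ℝ) + 1) * y)) = 0 := by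
      intro m; rw [h.nondiff_zero i hi m]; ring
    unfold Afun
    rw [tsum_congr hz, tsum_zero]

/-- Under (HS1), (HS2) and alternative (a) of (HS3_r̄), there is `λ* > 0`
such that `det Δ_{ρ;λ}(iy) ≠ 0` whenever `Re λ > −λ*`, `ρ ∈ [0,1]` and `y ∈ ℝ`. -/
theorem statement_3
    {d ddiff : ℕ} {τ ν : ℝ} {α : ℕ → Vec d} {G : Vec d → ℝ → Vec d} {Pm Pp : Vec d}
    {rbar c0 : ℝ}
    (hHS1 : HS1 d ddiff τ α ν) (hHS2 : HS2 d G Pm Pp)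
    (hrbar : rbar ∈ Set.Ioo (0 : ℝ) 1) (hc0 : c0 ≠ 0)
    (hHS3a : HS3a G Pm Pp rbar) :
    ∃ lamStar : ℝ, 0 < lamStar ∧
      ∀ lam : ℂ, -lamStar < lam.re → ∀ ρ ∈ Set.Icc (0 : ℝ) 1, ∀ y : ℝ,
        (charMat τ c0 α G Pm Pp rbar ρ y lam).det ≠ 0 := by
  have hd : 0 < d := lt_of_lt_of_le hHS1.ddiff_pos hHS1.ddiff_le
  obtain ⟨κ, hκ, hbound⟩ := dgrho_coercive hd hHS3a
  refine ⟨κ, hκ, ?_⟩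
  intro lam hre ρ hρ y hdet
  obtain ⟨v, hvne, hv0⟩ := Matrix.exists_mulVec_eq_zero_iff.mpr hdet
  set C : Matrix (Fin d) (Fin d) ℝ := DGrho G Pm Pp rbar ρ with hC
  set a : Vec d := fun i => (v i).re with ha
  set b : Vec d := fun i => (v i).im with hb
  -- row equations
  have hrow : ∀ i, ((c0 : ℂ) * (y : ℂ) * Complex.I + lam
      + 2 * (τ : ℂ) * ((Afun α y i : ℝ) : ℂ)) * v i
      = ∑ j, ((C i j : ℝ) : ℂ) * v j := by
    intro i
    have h := congrFun hv0 i
    simp only [charMat, Matrix.mulVec, dotProduct, Pi.zero_apply, sub_mul,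
      Finset.sum_sub_distrib, ite_mul, zero_mul, Finset.sum_ite_eq, Finset.mem_univ,
      if_true, ← hC] at h
    exact sub_eq_zero.mp h
  have re_conj_mul_mul : ∀ D z : ℂ, (starRingEnd ℂ z * (D * z)).re
      = D.re * (z.re ^ 2 + z.im ^ 2) := by
    intro D z
    simp [Complex.mul_re, Complex.mul_im]
    ring
  have re_conj_mul_real : ∀ (c : ℝ) (z w : ℂ), (starRingEnd ℂ z * ((c : ℂ) * w)).re
      = c * (z.re * w.re + z.im * w.im) := by
    intro c z w
    simp [Complex.mul_re, Complex.mul_im]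
    ring
  have hDre : ∀ i : Fin d, ((c0 : ℂ) * (y : ℂ) * Complex.I + lam
      + 2 * (τ : ℂ) * ((Afun α y i : ℝ) : ℂ)).re = lam.re + 2 * τ * Afun α y i := by
    intro i
    simp [Complex.add_re, Complex.mul_re, Complex.mul_im]
  have hmain : ∀ i, (lam.re + 2 * τ * Afun α y i) * ((v i).re ^ 2 + (v i).im ^ 2)
      = ∑ j, C i j * ((v i).re * (v j).re + (v i).im * (v j).im) := by
    intro i
    have h := congrArg (fun z => (starRingEnd ℂ (v i) * z).re) (hrow i)
    simp only [Finset.mul_sum, Complex.re_sum] at h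
    rw [re_conj_mul_mul, hDre] at h
    rw [h]
    exact Finset.sum_congr rfl fun j _ => re_conj_mul_real (C i j) (v i) (v j)
  set n : ℝ := dotV a a + dotV b b with hns
  have hn : ∑ i, ((v i).re ^ 2 + (v i).im ^ 2) = n := by
    rw [hns, dotV, dotV, ← Finset.sum_add_distrib]
    exact Finset.sum_congr rfl fun i _ => by rw [ha, hb]; ring
  have hsum : ∑ i, (lam.re + 2 * τ * Afun α y i) * ((v i).re ^ 2 + (v i).im ^ 2)
      = dotV a (C.mulVec a) + dotV b (C.mulVec b) := by
    rw [Finset.sum_congr rfl fun i _ => hmain i]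
    simp only [dotV, Matrix.mulVec, dotProduct, ← Finset.sum_add_distrib]
    refine Finset.sum_congr rfl fun i _ => ?_
    rw [Finset.mul_sum, Finset.mul_sum, ← Finset.sum_add_distrib]
    exact Finset.sum_congr rfl fun j _ => by rw [ha, hb]; ring
  have hsplit2 : ∑ i, (lam.re + 2 * τ * Afun α y i) * ((v i).re ^ 2 + (v i).im ^ 2)
      = lam.re * n + ∑ i, 2 * τ * Afun α y i * ((v i).re ^ 2 + (v i).im ^ 2) := by
    simp_rw [add_mul]
    rw [Finset.sum_add_distrib, ← Finset.mul_sum, hn]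
  have hApos : 0 ≤ ∑ i, 2 * τ * Afun α y i * ((v i).re ^ 2 + (v i).im ^ 2) := by
    refine Finset.sum_nonneg fun i _ => ?_
    have h1 : 0 ≤ 2 * τ * Afun α y i :=
      mul_nonneg (by linarith [hHS1.τ_pos]) (Afun_nonneg hHS1 i y)
    exact mul_nonneg h1 (by positivity)
  have hCa := hbound ρ hρ a
  have hCb := hbound ρ hρ b
  have hn0 : 0 ≤ n := by
    rw [hns]
    linarith [dotV_nonneg a, dotV_nonneg b]
  have hfin : (lam.re + κ) * n ≤ 0 := by
    have : lam.re * n + ∑ i, 2 * τ * Afun α y i * ((v i).re ^ 2 + (v i).im ^ 2)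
        ≤ -κ * n := by
      rw [← hsplit2, hsum, hns]
      rw [← hC] at hCa hCb
      linarith
    nlinarith
  have hnz : n = 0 := by nlinarith
  have haa : dotV a a = 0 := by
    have := dotV_nonneg a
    have := dotV_nonneg b
    rw [hns] at hnz
    linarith
  have hbb : dotV b b = 0 := by
    have := dotV_nonneg a
    have := dotV_nonneg b
    rw [hns] at hnz
    linarith
  apply hvne
  funext i
  have ha0 : a i = 0 := by
    have h := (Finset.sum_eq_zero_iff_of_nonneg
      (fun j (_ : j ∈ Finset.univ) => mul_self_nonneg (a j))).mp haa i (Finset.mem_univ i)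
    exact mul_self_eq_zero.mp h
  have hb0 : b i = 0 := by
    have h := (Finset.sum_eq_zero_iff_of_nonneg
      (fun j (_ : j ∈ Finset.univ) => mul_self_nonneg (b j))).mp hbb i (Finset.mem_univ i)
    exact mul_self_eq_zero.mp h
  have : (v i).re = 0 := ha0
  have him : (v i).im = 0 := hb0
  exact Complex.ext this him
end
end

section
/- Assume (HS1) and (HS2) hold, let c̄0 be a nonzero real number, and assume the triplet (G, P^−, P^+) satisfies alternative (b) of (HS3_r̄): the matrices −G^{[1,1]}(P^±;r̄) and −G^{[2,2]}(P^±;r̄) are positive definite and there exists Γ > 0 with G^{[1,2]}(U;r̄) = −Γ G^{[2,1]}(U;r̄)^T for all U ∈ ℝ^d. Then there exists λ* > 0 such that for every λ ∈ ℂ with Re λ > −λ*, every ρ ∈ [0,1], and every y ∈ ℝ, the d×d complex matrix Δ_{ρ;λ}(iy) = c̄0 i y I + 2τ A(y) − DG_ρ + λ I has nonzero determinant. -/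
open MeasureTheory Filter Topology

noncomputable section

variable {d : ℕ}

lemma quad_pos_bound {d : ℕ} (f : Vec d → ℝ) (hc : Continuous f)
    (hh : ∀ (c : ℝ) (a : Vec d), f (c • a) = c ^ 2 * f a)
    (hpos : ∀ a : Vec d, a ≠ 0 → 0 < f a) :
    ∃ κ : ℝ, 0 < κ ∧ ∀ a : Vec d, κ * ∑ i, a i ^ 2 ≤ f a := by
  have hf0 : f 0 = 0 := by
    have := hh 0 0
    simpa using this
  rcases Nat.eq_zero_or_pos d with hd | hd
  · refine ⟨1, one_pos, fun a => ?_⟩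
    subst hd
    have ha : a = 0 := funext fun i => (Fin.elim0 i)
    rw [ha, Finset.univ_eq_empty, Finset.sum_empty, mul_zero]
    exact hf0.ge
  · set S : Set (Vec d) := {a | ∑ i, a i ^ 2 = 1} with hS
    have hcont : Continuous fun a : Vec d => ∑ i, a i ^ 2 := by
      exact continuous_finset_sum _ fun i _ => (continuous_apply i).pow 2
    have hScl : IsClosed S := isClosed_eq hcont continuous_const
    have hSsub : S ⊆ Metric.closedBall 0 1 := by
      intro a ha
      rw [Metric.mem_closedBall, dist_zero_right]
      rw [pi_norm_le_iff_of_nonneg (by norm_num)]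
      intro i
      have h2 : a i ^ 2 ≤ 1 := by
        have := Finset.single_le_sum (f := fun j => a j ^ 2)
          (fun j _ => sq_nonneg _) (Finset.mem_univ i)
        rw [ha] at this; exact this
      rw [Real.norm_eq_abs]
      nlinarith [abs_nonneg (a i), sq_abs (a i)]
    have hcomp : IsCompact S :=
      (isCompact_closedBall (0 : Vec d) 1).of_isClosed_subset hScl hSsub
    have hne : S.Nonempty := by
      refine ⟨Pi.single ⟨0, hd⟩ 1, ?_⟩
      simp only [hS, Set.mem_setOf_eq, Pi.single_apply]
      rw [Finset.sum_congr rfl (fun j _ => by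
        rw [show ((if j = (⟨0, hd⟩ : Fin d) then (1:ℝ) else 0) ^ 2)
          = (if j = (⟨0, hd⟩ : Fin d) then (1:ℝ) else 0) by split <;> norm_num])]
      simp
    obtain ⟨a0, ha0S, hmin⟩ := hcomp.exists_isMinOn hne hc.continuousOn
    have ha0ne : a0 ≠ 0 := by
      intro h
      rw [h] at ha0S
      simp [hS] at ha0S
    refine ⟨f a0, hpos a0 ha0ne, fun a => ?_⟩
    by_cases ha : a = 0
    · simp [ha, hf0]
    · have hsum : 0 < ∑ i, a i ^ 2 := by
        obtain ⟨i, hi⟩ := Function.ne_iff.mp ha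
        exact Finset.sum_pos' (fun j _ => sq_nonneg _)
          ⟨i, Finset.mem_univ i, by nlinarith [sq_abs (a i), abs_pos.mpr hi]⟩
      set s : ℝ := Real.sqrt (∑ i, a i ^ 2) with hsdef
      have hs : 0 < s := Real.sqrt_pos.mpr hsum
      have hs2 : s ^ 2 = ∑ i, a i ^ 2 := Real.sq_sqrt hsum.le
      have hb : s⁻¹ • a ∈ S := by
        simp only [hS, Set.mem_setOf_eq, Pi.smul_apply, smul_eq_mul, mul_pow]
        rw [← Finset.mul_sum, ← hs2]
        field_simp
      have := hmin hb
      have h2 : f a = s ^ 2 * f (s⁻¹ • a) := by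
        rw [← hh s (s⁻¹ • a), smul_inv_smul₀ hs.ne']
      rw [h2, ← hs2]
      have := mul_le_mul_of_nonneg_left this (sq_nonneg s)
      linarith [this]


lemma Afun_nonneg' {d ddiff : ℕ} (α : ℕ → Vec d)
    (hzero : ∀ i : Fin d, ddiff ≤ (i : ℕ) → ∀ m : ℕ, α (m + 1) i = 0)
    (hApos : ∀ i : Fin d, (i : ℕ) < ddiff → ∀ z : ℝ, 0 < z → z < 2 * Real.pi →
      0 < ∑' m : ℕ, α (m + 1) i * (1 - Real.cos (((m : ℝ) + 1) * z)))
    (i : Fin d) (y : ℝ) : 0 ≤ Afun α y i := by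
  by_cases hi : (i : ℕ) < ddiff
  · set k : ℤ := ⌊y / (2 * Real.pi)⌋ with hk
    set t : ℝ := Int.fract (y / (2 * Real.pi)) with ht
    have hπ : (0:ℝ) < 2 * Real.pi := by positivity
    have hyz : ∀ m : ℕ, Real.cos (((m : ℝ) + 1) * y)
        = Real.cos (((m : ℝ) + 1) * (2 * Real.pi * t)) := by
      intro m
      have hfr : (k : ℝ) + t = y / (2 * Real.pi) := Int.floor_add_fract _
      have hy' : y = 2 * Real.pi * (k : ℝ) + 2 * Real.pi * t := by
        have : ((k : ℝ) + t) * (2 * Real.pi) = y := by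
          rw [hfr]; field_simp
        linarith [this]
      have harg : ((m : ℝ) + 1) * y
          = ((m : ℝ) + 1) * (2 * Real.pi * t)
            + ((((m : ℕ) + 1 : ℕ) : ℤ) * k : ℤ) * (2 * Real.pi) := by
        rw [hy']; push_cast; ring
      rw [harg, Real.cos_add_int_mul_two_pi]
    have hAeq : Afun α y i = Afun α (2 * Real.pi * t) i :=
      tsum_congr fun m => by rw [hyz m]
    have htnn : (0:ℝ) ≤ t := Int.fract_nonneg _
    rcases eq_or_lt_of_le htnn with h0 | h0
    · rw [hAeq, ← h0]
      simp [Afun]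
    · rw [hAeq]
      refine le_of_lt (hApos i hi (2 * Real.pi * t) (by positivity) ?_)
      have := Int.fract_lt_one (y / (2 * Real.pi))
      nlinarith [Real.pi_pos]
  · simp [Afun, hzero i (by omega)]

lemma reA (wr a c0 y τ' : ℝ) (l z : ℂ) :
    (((wr : ℝ) : ℂ) * (starRingEnd ℂ) z
      * (((c0 : ℂ) * (y : ℂ) * Complex.I + l + 2 * (τ' : ℂ) * ((a : ℝ) : ℂ)) * z)).re
    = wr * Complex.normSq z * (l.re + 2 * τ' * a) := by
  simp only [Complex.mul_re, Complex.mul_im, Complex.add_re, Complex.add_im,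
    Complex.I_re, Complex.I_im, Complex.ofReal_re, Complex.ofReal_im,
    Complex.conj_re, Complex.conj_im, Complex.normSq_apply,
    Complex.re_ofNat, Complex.im_ofNat]
  ring

lemma reB (wr cr : ℝ) (z1 z2 : ℂ) :
    (((wr : ℝ) : ℂ) * (starRingEnd ℂ) z1 * (((cr : ℝ) : ℂ) * z2)).re
    = wr * cr * (z1.re * z2.re + z1.im * z2.im) := by
  simp only [Complex.mul_re, Complex.mul_im, Complex.ofReal_re, Complex.ofReal_im,
    Complex.conj_re, Complex.conj_im]
  ring


/-- Under (HS1), (HS2) and alternative (b) of (HS3_r̄), there is `λ* > 0`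
such that `det Δ_{ρ;λ}(iy) ≠ 0` whenever `Re λ > −λ*`, `ρ ∈ [0,1]` and `y ∈ ℝ`. -/
theorem statement_4
    {d ddiff : ℕ} {τ ν : ℝ} {α : ℕ → Vec d} {G : Vec d → ℝ → Vec d} {Pm Pp : Vec d}
    {rbar c0 : ℝ}
    (hHS1 : HS1 d ddiff τ α ν) (hHS2 : HS2 d G Pm Pp)
    (hrbar : rbar ∈ Set.Ioo (0 : ℝ) 1) (hc0 : c0 ≠ 0)
    (hHS3b : HS3b ddiff G Pm Pp rbar) :
    ∃ lamStar : ℝ, 0 < lamStar ∧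
      ∀ lam : ℂ, -lamStar < lam.re → ∀ ρ ∈ Set.Icc (0 : ℝ) 1, ∀ y : ℝ,
        (charMat τ c0 α G Pm Pp rbar ρ y lam).det ≠ 0 := by
  obtain ⟨hblocks, Γ, hΓ, hΓrel⟩ := hHS3b
  have hAnn : ∀ (i : Fin d) (y : ℝ), 0 ≤ Afun α y i :=
    Afun_nonneg' α hHS1.nondiff_zero hHS1.A_pos
  set w : Fin d → ℝ := fun i => if (i : ℕ) < ddiff then 1 else Γ with hw
  have hwpos : ∀ i, 0 < w i := fun i => by
    by_cases h : (i : ℕ) < ddiff <;> simp [hw, h, hΓ]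
  set W : ℝ := max 1 Γ with hWdef
  have hWpos : (0 : ℝ) < W := lt_of_lt_of_le one_pos (le_max_left _ _)
  have hwle : ∀ i, w i ≤ W := fun i => by
    by_cases h : (i : ℕ) < ddiff
    · simp only [hw, if_pos h]; exact le_max_left _ _
    · simp only [hw, if_neg h]; exact le_max_right _ _
  set fP : Vec d → Vec d → ℝ :=
    fun P a => ∑ i, ∑ j, w i * a i * (-(DUG G P rbar)) i j * a j with hfP
  -- positivity of the block quadratic form
  have hfpos : ∀ P ∈ ({Pm, Pp} : Set (Vec d)), ∀ a : Vec d, a ≠ 0 → 0 < fP P a := by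
    intro P hP a ha
    set N : Matrix (Fin d) (Fin d) ℝ := -(DUG G P rbar) with hN
    set a1 : Vec d := fun i => if (i : ℕ) < ddiff then a i else 0 with ha1
    set a2 : Vec d := fun i => if (i : ℕ) < ddiff then 0 else a i with ha2
    have hNrel : ∀ i j : Fin d, (i : ℕ) < ddiff → ¬ ((j : ℕ) < ddiff) →
        N i j = -Γ * N j i := by
      intro i j hi hj
      have h := hΓrel P i j hi (by omega)
      simp only [hN, Matrix.neg_apply]
      rw [h]; ring
    have hdecomp : fP P a = dotV a1 (N.mulVec a1) + Γ * dotV a2 (N.mulVec a2) := by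
      have hsym : ∀ i j : Fin d,
          (w i * a i * N i j * a j - a1 i * N i j * a1 j - Γ * (a2 i * N i j * a2 j))
          + (w j * a j * N j i * a i - a1 j * N j i * a1 i - Γ * (a2 j * N j i * a2 i))
          = 0 := by
        intro i j
        by_cases hi : (i : ℕ) < ddiff <;> by_cases hj : (j : ℕ) < ddiff
        · simp only [hw, ha1, ha2, if_pos hi, if_pos hj]; ring
        · rw [hNrel i j hi hj]
          simp only [hw, ha1, ha2, if_pos hi, if_neg hj]; ring
        · rw [hNrel j i hj hi]
          simp only [hw, ha1, ha2, if_pos hj, if_neg hi]; ring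
        · simp only [hw, ha1, ha2, if_neg hi, if_neg hj]; ring
      have key : ∀ g : Fin d → Fin d → ℝ, (∀ i j, g i j + g j i = 0) →
          ∑ i, ∑ j, g i j = 0 := by
        intro g hg
        have hcomm : ∑ i, ∑ j, g i j = ∑ i, ∑ j, g j i := Finset.sum_comm
        have h2 : (2 : ℝ) * ∑ i, ∑ j, g i j = 0 := by
          calc (2 : ℝ) * ∑ i, ∑ j, g i j
              = ∑ i, ∑ j, g i j + ∑ i, ∑ j, g j i := by rw [← hcomm]; ring
            _ = ∑ i, ∑ j, (g i j + g j i) := by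
                rw [← Finset.sum_add_distrib]
                exact Finset.sum_congr rfl fun i _ => by rw [← Finset.sum_add_distrib]
            _ = 0 := by simp [hg]
        linarith
      have e1 : dotV a1 (N.mulVec a1) = ∑ i, ∑ j, a1 i * N i j * a1 j := by
        simp only [dotV, Matrix.mulVec, dotProduct, Finset.mul_sum]
        exact Finset.sum_congr rfl fun i _ => Finset.sum_congr rfl fun j _ => by ring
      have e2 : Γ * dotV a2 (N.mulVec a2) = ∑ i, ∑ j, Γ * (a2 i * N i j * a2 j) := by
        simp only [dotV, Matrix.mulVec, dotProduct, Finset.mul_sum]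
        exact Finset.sum_congr rfl fun i _ => Finset.sum_congr rfl fun j _ => by ring
      have hc : ∑ i, ∑ j, (w i * a i * N i j * a j - a1 i * N i j * a1 j
          - Γ * (a2 i * N i j * a2 j))
          = fP P a - dotV a1 (N.mulVec a1) - Γ * dotV a2 (N.mulVec a2) := by
        rw [hfP, e1, e2]
        simp only [hN]
        rw [← Finset.sum_sub_distrib, ← Finset.sum_sub_distrib]
        exact Finset.sum_congr rfl fun i _ => by
          rw [← Finset.sum_sub_distrib, ← Finset.sum_sub_distrib]
      have := key _ hsym
      rw [hc] at this
      linarith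
    have hsupp1 : SuppFirst d ddiff a1 := fun i hi => by
      simp only [ha1]
      rw [if_neg (by omega)]
    have hsupp2 : SuppLast d ddiff a2 := fun i hi => by
      simp [ha2, hi]
    have hcases : a1 ≠ 0 ∨ a2 ≠ 0 := by
      by_contra h
      push_neg at h
      apply ha
      funext i
      have h1 := congrFun h.1 i
      have h2 := congrFun h.2 i
      by_cases hcc : (i : ℕ) < ddiff
      · simpa [ha1, hcc] using h1
      · simpa [ha2, hcc] using h2
    obtain ⟨hb1, hb2⟩ := hblocks P hP
    have dot1nn : 0 ≤ dotV a1 (N.mulVec a1) := by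
      rcases eq_or_ne a1 0 with h | h
      · simp [h, dotV]
      · exact (hb1 a1 h hsupp1).le
    have dot2nn : 0 ≤ dotV a2 (N.mulVec a2) := by
      rcases eq_or_ne a2 0 with h | h
      · simp [h, dotV]
      · exact (hb2 a2 h hsupp2).le
    rw [hdecomp]
    rcases hcases with h | h
    · have := hb1 a1 h hsupp1
      nlinarith [mul_nonneg hΓ.le dot2nn]
    · have := hb2 a2 h hsupp2
      nlinarith [mul_pos hΓ this]
  have hfc : ∀ P, Continuous (fP P) := by
    intro P
    apply continuous_finset_sum
    intro i _
    apply continuous_finset_sum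
    intro j _
    exact ((continuous_const.mul (continuous_apply i)).mul continuous_const).mul
      (continuous_apply j)
  have hfh : ∀ P (c : ℝ) (a : Vec d), fP P (c • a) = c ^ 2 * fP P a := by
    intro P c a
    simp only [hfP]
    rw [Finset.mul_sum]
    refine Finset.sum_congr rfl fun i _ => ?_
    rw [Finset.mul_sum]
    refine Finset.sum_congr rfl fun j _ => ?_
    simp only [Pi.smul_apply, smul_eq_mul]
    ring
  set F : Vec d → ℝ := fun a => min (fP Pm a) (fP Pp a) with hF
  have hFc : Continuous F := (hfc Pm).min (hfc Pp)
  have hFh : ∀ (c : ℝ) (a : Vec d), F (c • a) = c ^ 2 * F a := by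
    intro c a
    simp only [hF]
    rw [hfh Pm c a, hfh Pp c a]
    rcases le_total (fP Pm a) (fP Pp a) with h | h
    · rw [min_eq_left h, min_eq_left (mul_le_mul_of_nonneg_left h (sq_nonneg c))]
    · rw [min_eq_right h, min_eq_right (mul_le_mul_of_nonneg_left h (sq_nonneg c))]
  have hFpos : ∀ a : Vec d, a ≠ 0 → 0 < F a := fun a ha =>
    lt_min (hfpos Pm (Set.mem_insert _ _) a ha)
      (hfpos Pp (Set.mem_insert_of_mem _ rfl) a ha)
  obtain ⟨κ, hκ, hFbound⟩ := quad_pos_bound F hFc hFh hFpos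
  -- uniform bound over ρ
  have hρb : ∀ ρ ∈ Set.Icc (0 : ℝ) 1, ∀ a : Vec d,
      κ * ∑ i, a i ^ 2 ≤ ∑ i, ∑ j, w i * a i * (-(DGrho G Pm Pp rbar ρ i j)) * a j := by
    intro ρ hρ a
    have hexp : ∑ i, ∑ j, w i * a i * (-(DGrho G Pm Pp rbar ρ i j)) * a j
        = ρ * fP Pm a + (1 - ρ) * fP Pp a := by
      simp only [hfP, Finset.mul_sum, ← Finset.sum_add_distrib]
      refine Finset.sum_congr rfl fun i _ => Finset.sum_congr rfl fun j _ => ?_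
      simp only [DGrho, Matrix.neg_apply, Matrix.add_apply, Matrix.smul_apply,
        smul_eq_mul]
      ring
    rw [hexp]
    have h1 := min_le_left (fP Pm a) (fP Pp a)
    have h2 := min_le_right (fP Pm a) (fP Pp a)
    have hb := hFbound a
    simp only [hF] at hb
    have e1 : 0 ≤ ρ * (fP Pm a - min (fP Pm a) (fP Pp a)) :=
      mul_nonneg hρ.1 (by linarith)
    have e2 : 0 ≤ (1 - ρ) * (fP Pp a - min (fP Pm a) (fP Pp a)) :=
      mul_nonneg (by linarith [hρ.2]) (by linarith)
    nlinarith [e1, e2, hb]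
  refine ⟨κ / W, div_pos hκ hWpos, ?_⟩
  intro lam hlam ρ hρ y hdet
  obtain ⟨v, hv, hveq⟩ := Matrix.exists_mulVec_eq_zero_iff.mpr hdet
  have hv0 : ∀ i, ∑ j, charMat τ c0 α G Pm Pp rbar ρ y lam i j * v j = 0 := by
    intro i
    have := congrFun hveq i
    simpa [Matrix.mulVec, dotProduct] using this
  have hz : (0 : ℝ) = ∑ i, (((w i : ℝ) : ℂ) * (starRingEnd ℂ) (v i)
      * ∑ j, charMat τ c0 α G Pm Pp rbar ρ y lam i j * v j).re := by
    simp [hv0]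
  have hper : ∀ i, (((w i : ℝ) : ℂ) * (starRingEnd ℂ) (v i)
      * ∑ j, charMat τ c0 α G Pm Pp rbar ρ y lam i j * v j).re
      = w i * Complex.normSq (v i) * (lam.re + 2 * τ * Afun α y i)
        - ∑ j, w i * DGrho G Pm Pp rbar ρ i j
            * ((v i).re * (v j).re + (v i).im * (v j).im) := by
    intro i
    have hsplit : ∑ j, charMat τ c0 α G Pm Pp rbar ρ y lam i j * v j
        = ((c0 : ℂ) * (y : ℂ) * Complex.I + lam
            + 2 * (τ : ℂ) * ((Afun α y i : ℝ) : ℂ)) * v i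
          - ∑ j, ((DGrho G Pm Pp rbar ρ i j : ℝ) : ℂ) * v j := by
      simp only [charMat, sub_mul, ite_mul, zero_mul, Finset.sum_sub_distrib]
      congr 1
      rw [Finset.sum_ite_eq]
      simp
    rw [hsplit, mul_sub, Complex.sub_re, Finset.mul_sum, Complex.re_sum]
    congr 1
    · exact reA (w i) (Afun α y i) c0 y τ lam (v i)
    · exact Finset.sum_congr rfl fun j _ =>
        reB (w i) (DGrho G Pm Pp rbar ρ i j) (v i) (v j)
  have hz2 : (0 : ℝ) = ∑ i, (w i * Complex.normSq (v i) * (lam.re + 2 * τ * Afun α y i)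
      - ∑ j, w i * DGrho G Pm Pp rbar ρ i j
          * ((v i).re * (v j).re + (v i).im * (v j).im)) :=
    hz.trans (Finset.sum_congr rfl fun i _ => hper i)
  -- rearrange
  have hperi2 : ∀ i : Fin d,
      w i * Complex.normSq (v i) * (lam.re + 2 * τ * Afun α y i)
      - ∑ j, w i * DGrho G Pm Pp rbar ρ i j
          * ((v i).re * (v j).re + (v i).im * (v j).im)
      = lam.re * (w i * Complex.normSq (v i))
        + 2 * τ * (w i * Afun α y i * Complex.normSq (v i))
        + ∑ j, (w i * (v i).re * (-(DGrho G Pm Pp rbar ρ i j)) * (v j).re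
            + w i * (v i).im * (-(DGrho G Pm Pp rbar ρ i j)) * (v j).im) := by
    intro i
    have hin : ∑ j, (w i * (v i).re * (-(DGrho G Pm Pp rbar ρ i j)) * (v j).re
        + w i * (v i).im * (-(DGrho G Pm Pp rbar ρ i j)) * (v j).im)
        = - ∑ j, w i * DGrho G Pm Pp rbar ρ i j
            * ((v i).re * (v j).re + (v i).im * (v j).im) := by
      rw [← Finset.sum_neg_distrib]
      exact Finset.sum_congr rfl fun j _ => by ring
    rw [hin]
    ring
  have hmainsum : (0 : ℝ) = ∑ i, (lam.re * (w i * Complex.normSq (v i))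
      + 2 * τ * (w i * Afun α y i * Complex.normSq (v i))
      + ∑ j, (w i * (v i).re * (-(DGrho G Pm Pp rbar ρ i j)) * (v j).re
          + w i * (v i).im * (-(DGrho G Pm Pp rbar ρ i j)) * (v j).im)) :=
    hz2.trans (Finset.sum_congr rfl fun i _ => hperi2 i)
  have hsplit2 : ∑ i, (lam.re * (w i * Complex.normSq (v i))
      + 2 * τ * (w i * Afun α y i * Complex.normSq (v i))
      + ∑ j, (w i * (v i).re * (-(DGrho G Pm Pp rbar ρ i j)) * (v j).re
          + w i * (v i).im * (-(DGrho G Pm Pp rbar ρ i j)) * (v j).im))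
      = lam.re * (∑ i, w i * Complex.normSq (v i))
        + 2 * τ * (∑ i, w i * Afun α y i * Complex.normSq (v i))
        + ((∑ i, ∑ j, w i * (v i).re * (-(DGrho G Pm Pp rbar ρ i j)) * (v j).re)
          + (∑ i, ∑ j, w i * (v i).im * (-(DGrho G Pm Pp rbar ρ i j)) * (v j).im)) := by
    simp only [Finset.sum_add_distrib, Finset.mul_sum]
  rw [hsplit2] at hmainsum
  -- inequalities
  have hT : 0 ≤ ∑ i, w i * Afun α y i * Complex.normSq (v i) :=
    Finset.sum_nonneg fun i _ =>
      mul_nonneg (mul_nonneg (hwpos i).le (hAnn i y)) (Complex.normSq_nonneg _)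
  have hQu : κ * ∑ i, (v i).re ^ 2
      ≤ ∑ i, ∑ j, w i * (v i).re * (-(DGrho G Pm Pp rbar ρ i j)) * (v j).re := by
    simpa using hρb ρ hρ (fun i => (v i).re)
  have hQx : κ * ∑ i, (v i).im ^ 2
      ≤ ∑ i, ∑ j, w i * (v i).im * (-(DGrho G Pm Pp rbar ρ i j)) * (v j).im := by
    simpa using hρb ρ hρ (fun i => (v i).im)
  have hS : ∑ i, Complex.normSq (v i) = ∑ i, (v i).re ^ 2 + ∑ i, (v i).im ^ 2 := by
    rw [← Finset.sum_add_distrib]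
    exact Finset.sum_congr rfl fun i _ => by
      simp only [Complex.normSq_apply]; ring
  have hSpos : 0 < ∑ i, Complex.normSq (v i) := by
    obtain ⟨i, hi⟩ := Function.ne_iff.mp hv
    exact Finset.sum_pos' (fun j _ => Complex.normSq_nonneg _)
      ⟨i, Finset.mem_univ i, Complex.normSq_pos.mpr hi⟩
  have hSw_nonneg : 0 ≤ ∑ i, w i * Complex.normSq (v i) :=
    Finset.sum_nonneg fun i _ => mul_nonneg (hwpos i).le (Complex.normSq_nonneg _)
  have hSw_le : ∑ i, w i * Complex.normSq (v i) ≤ W * ∑ i, Complex.normSq (v i) := by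
    rw [Finset.mul_sum]
    exact Finset.sum_le_sum fun i _ =>
      mul_le_mul_of_nonneg_right (hwle i) (Complex.normSq_nonneg _)
  have hκS : κ * ∑ i, Complex.normSq (v i)
      = κ * ∑ i, (v i).re ^ 2 + κ * ∑ i, (v i).im ^ 2 := by rw [hS]; ring
  have hτ := hHS1.τ_pos
  have hineq : lam.re * (∑ i, w i * Complex.normSq (v i))
      + κ * ∑ i, Complex.normSq (v i) ≤ 0 := by
    nlinarith [hT, hQu, hQx, hκS, hmainsum, mul_nonneg (le_of_lt hτ) hT]
  rcases le_or_gt 0 lam.re with hc | hc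
  · have h1 : 0 ≤ lam.re * ∑ i, w i * Complex.normSq (v i) :=
      mul_nonneg hc hSw_nonneg
    have h2 := mul_pos hκ hSpos
    linarith
  · have h1 : lam.re * (W * ∑ i, Complex.normSq (v i))
        ≤ lam.re * ∑ i, w i * Complex.normSq (v i) :=
      mul_le_mul_of_nonpos_left hSw_le hc.le
    have h2 : -κ < lam.re * W := by
      have h3 := mul_lt_mul_of_pos_right hlam hWpos
      have h4 : -(κ / W) * W = -κ := by field_simp
      linarith
    have h4 : 0 < (lam.re * W + κ) * ∑ i, Complex.normSq (v i) :=
      mul_pos (by linarith) hSpos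
    have e : (lam.re * W + κ) * ∑ i, Complex.normSq (v i)
        = lam.re * (W * ∑ i, Complex.normSq (v i))
          + κ * ∑ i, Complex.normSq (v i) := by ring
    linarith
end
end
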